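/- arXiv:2104.06532 — 3 statements merged into one kernel-verified Lean document; each statement's English description precedes it below -/
import Mathlib

section
/- As N → ∞, the quantity (1/2)·(N² + N − N(N−1)·cos(2·arctan(1/√(N−2)))^(N−2)) divided by N² converges to (e²−1)/(2e²). -/
open Real Filter

lemma cos_eq (N : ℕ) (hN : 4 ≤ N) :
    Real.cos (2 * arctan (1 / Real.sqrt ((N : ℝ) - 2))) = ((N : ℝ) - 3) / ((N : ℝ) - 1) := by
  have h2 : (0:ℝ) < (N : ℝ) - 2 := by
    have : (4:ℝ) ≤ N := by exact_mod_cast hN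
    linarith
  have h1 : ((N:ℝ) - 1) ≠ 0 := by linarith
  set x := 1 / Real.sqrt ((N:ℝ) - 2) with hxdef
  have hx2 : x ^ 2 = 1 / ((N:ℝ) - 2) := by
    rw [hxdef, div_pow, one_pow, Real.sq_sqrt h2.le]
  have hp : (0:ℝ) < 1 + x ^ 2 := by positivity
  rw [Real.cos_two_mul, Real.cos_arctan, div_pow, one_pow, Real.sq_sqrt hp.le, hx2]
  field_simp
  ring

lemma tendsto_pow_part :
    Tendsto (fun N : ℕ => (((N:ℝ) - 3) / ((N:ℝ) - 1)) ^ (N - 2)) atTop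
      (nhds (Real.exp (-2))) := by
  have hF : Tendsto (fun n : ℕ => (1 + (-2) / (n : ℝ)) ^ n) atTop (nhds (Real.exp (-2))) :=
    Real.tendsto_one_add_div_pow_exp (-2)
  have hcomp : Tendsto (fun N : ℕ => (1 + (-2) / ((N - 1 : ℕ) : ℝ)) ^ (N - 1)) atTop
      (nhds (Real.exp (-2))) := hF.comp (tendsto_sub_atTop_nat 1)
  have hden : Tendsto (fun N : ℕ => 1 + (-2) / ((N:ℝ) - 1)) atTop (nhds 1) := by
    have h : Tendsto (fun N : ℕ => (N:ℝ) - 1) atTop atTop :=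
      tendsto_atTop_add_const_right _ (-1) tendsto_natCast_atTop_atTop
    have := (tendsto_const_nhds (x := (-2:ℝ))).div_atTop h
    simpa using this.const_add 1
  have := hcomp.div hden (by norm_num)
  rw [div_one] at this
  refine this.congr' ?_
  filter_upwards [eventually_ge_atTop 4] with N hN
  have h4 : (4:ℝ) ≤ N := by exact_mod_cast hN
  have hcast : ((N - 1 : ℕ) : ℝ) = (N:ℝ) - 1 := by
    rw [Nat.cast_sub (by omega)]; norm_num
  have h1 : (0:ℝ) < (N:ℝ) - 1 := by linarith
  have ha : (1 + (-2) / ((N:ℝ) - 1)) = ((N:ℝ) - 3) / ((N:ℝ) - 1) := by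
    field_simp
    ring
  have hane : ((N:ℝ) - 3) / ((N:ℝ) - 1) ≠ 0 := by
    apply div_ne_zero <;> intro h <;> nlinarith
  have hexp : N - 1 = (N - 2) + 1 := by omega
  simp only [Pi.div_apply]
  rw [hcast, ha, hexp, pow_succ, mul_div_assoc, div_self hane, mul_one]

/-- The QFI (1/2)(N² + N − N(N−1)cos^{N−2}(2 arctan(1/√(N−2)))) divided by N²
converges to (e²−1)/(2e²). -/
theorem stmt_2 :
    Tendsto (fun N : ℕ =>
        (1 / 2 * ((N : ℝ) ^ 2 + (N : ℝ) -
          (N : ℝ) * ((N : ℝ) - 1) *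
            Real.cos (2 * arctan (1 / Real.sqrt ((N : ℝ) - 2))) ^ (N - 2))) / (N : ℝ) ^ 2)
      atTop (nhds ((Real.exp 1 ^ 2 - 1) / (2 * Real.exp 1 ^ 2))) := by
  have hinv : Tendsto (fun N : ℕ => 1 / (N:ℝ)) atTop (nhds 0) :=
    tendsto_one_div_atTop_nhds_zero_nat
  have hmain : Tendsto (fun N : ℕ =>
      1 / 2 * (1 + 1 / (N:ℝ) - (1 - 1 / (N:ℝ)) *
        (((N:ℝ) - 3) / ((N:ℝ) - 1)) ^ (N - 2))) atTop
      (nhds (1 / 2 * (1 + 0 - (1 - 0) * Real.exp (-2)))) := by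
    exact (((tendsto_const_nhds.add hinv).sub
      ((tendsto_const_nhds.sub hinv).mul tendsto_pow_part)).const_mul _)
  have hval : 1 / 2 * (1 + 0 - (1 - 0) * Real.exp (-2))
      = (Real.exp 1 ^ 2 - 1) / (2 * Real.exp 1 ^ 2) := by
    have h2 : Real.exp (-2) = (Real.exp 1 ^ 2)⁻¹ := by
      rw [← Real.exp_nat_mul]
      rw [← Real.exp_neg]
      norm_num
    rw [h2]
    have hpos : Real.exp 1 ^ 2 ≠ 0 := by positivity
    field_simp
    ring
  rw [← hval]
  refine hmain.congr' ?_
  filter_upwards [eventually_ge_atTop 4] with N hN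
  have h4 : (4:ℝ) ≤ N := by exact_mod_cast hN
  have hN0 : (N:ℝ) ≠ 0 := by linarith
  rw [cos_eq N hN]
  generalize (((N:ℝ) - 3) / ((N:ℝ) - 1)) ^ (N - 2) = c
  field_simp
end

section
/- Define f(N, x) = 2N(N−1)² sin²(x) cos^{2N−4}(x) / (N²(1 − cos^{N−2}(2x)) + N(1 + cos^{N−2}(2x))) for N ≥ 3 and x ∈ ℝ. Then f(N, arctan(1/√(N−2))) converges to 2/(e − e^{−1}) as N → ∞. -/
open Real Filter Set
open scoped Topology

/-- Ratio of reciprocal QFI to method-of-moments error of the twist-untwist protocol. -/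
noncomputable def f (N : ℕ) (x : ℝ) : ℝ :=
  (2 * (N : ℝ) * ((N : ℝ) - 1) ^ 2 * Real.sin x ^ 2 * Real.cos x ^ (2 * N - 4)) /
    ((N : ℝ) ^ 2 * (1 - Real.cos (2 * x) ^ (N - 2)) +
      (N : ℝ) * (1 + Real.cos (2 * x) ^ (N - 2)))

private lemma aux1 (c : ℝ) :
    Tendsto (fun m : ℕ => (1 + c / ((m : ℝ) + 1)) ^ m) atTop (𝓝 (Real.exp c)) := by
  have h1 : Tendsto (fun m : ℕ => (1 + c / ((m : ℝ) + 1)) ^ (m + 1)) atTop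
      (𝓝 (Real.exp c)) := by
    have := (Real.tendsto_one_add_div_pow_exp c).comp (tendsto_add_atTop_nat 1)
    refine this.congr (fun m => ?_)
    simp only [Function.comp]
    push_cast
    ring_nf
  have h0 : Tendsto (fun m : ℕ => c / ((m : ℝ) + 1)) atTop (𝓝 0) := by
    apply Tendsto.div_atTop tendsto_const_nhds
    exact tendsto_atTop_add_const_right atTop 1 tendsto_natCast_atTop_atTop
  have h2 : Tendsto (fun m : ℕ => (1 + c / ((m : ℝ) + 1))⁻¹) atTop (𝓝 1) := by
    have := (tendsto_const_nhds.add h0).inv₀ (by norm_num : (1:ℝ) + 0 ≠ 0)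
    simpa using this
  have hev : ∀ᶠ m : ℕ in atTop, (1 : ℝ) + c / ((m : ℝ) + 1) ≠ 0 := by
    have := h0.eventually (Metric.ball_mem_nhds (0:ℝ) one_pos)
    filter_upwards [this] with m hm
    rw [Real.dist_eq, sub_zero] at hm
    cases' abs_lt.mp hm with h h'
    intro hc; linarith
  have hprod : Tendsto (fun m : ℕ => (1 + c / ((m : ℝ) + 1)) ^ m) atTop
      (𝓝 (Real.exp c * 1)) := by
    refine (h1.mul h2).congr' ?_
    filter_upwards [hev] with m hm
    rw [pow_succ, mul_assoc, mul_inv_cancel₀ hm, mul_one]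
  simpa using hprod

private lemma aux2 (c : ℝ) :
    Tendsto (fun N : ℕ => (1 + c / ((N : ℝ) - 1)) ^ (N - 2)) atTop (𝓝 (Real.exp c)) := by
  have h := (aux1 c).comp (tendsto_sub_atTop_nat 2)
  refine h.congr' ?_
  filter_upwards [eventually_ge_atTop 3] with N hN
  have h2 : ((N - 2 : ℕ) : ℝ) = (N : ℝ) - 2 := by
    have : (2:ℕ) ≤ N := by omega
    push_cast [Nat.cast_sub this]; ring
  simp only [Function.comp, h2]
  ring_nf

/-- f(N, arctan(1/√(N−2))) → 2/(e − e⁻¹) as N → ∞. -/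
theorem stmt_3 :
    Tendsto (fun N : ℕ => f N (arctan (1 / Real.sqrt ((N : ℝ) - 2))))
      atTop (nhds (2 / (Real.exp 1 - (Real.exp 1)⁻¹))) := by
  have hA := aux2 (-1)
  have hB := aux2 (-2)
  have hn1 : Tendsto (fun N : ℕ => 1 / (N : ℝ)) atTop (𝓝 0) :=
    tendsto_one_div_atTop_nhds_zero_nat
  have hnum : Tendsto
      (fun N : ℕ => 2 * (1 - 1 / (N : ℝ)) * (1 + (-1) / ((N : ℝ) - 1)) ^ (N - 2))
      atTop (𝓝 (2 * (1 - 0) * Real.exp (-1))) :=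
    ((tendsto_const_nhds.sub hn1).const_mul 2).mul hA
  have hden : Tendsto
      (fun N : ℕ => (1 - (1 + (-2) / ((N : ℝ) - 1)) ^ (N - 2)) +
        (1 + (1 + (-2) / ((N : ℝ) - 1)) ^ (N - 2)) * (1 / (N : ℝ)))
      atTop (𝓝 ((1 - Real.exp (-2)) + (1 + Real.exp (-2)) * 0)) :=
    (tendsto_const_nhds.sub hB).add ((tendsto_const_nhds.add hB).mul hn1)
  have hexp2 : Real.exp (-2) < 1 := by
    rw [show (1:ℝ) = Real.exp 0 from (Real.exp_zero).symm]
    exact Real.exp_lt_exp.mpr (by norm_num)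
  have hne : ((1:ℝ) - Real.exp (-2)) + (1 + Real.exp (-2)) * 0 ≠ 0 := by
    simp; linarith
  have hg := hnum.div hden hne
  have hval : 2 * (1 - 0) * Real.exp (-1) /
      (((1:ℝ) - Real.exp (-2)) + (1 + Real.exp (-2)) * 0) =
      2 / (Real.exp 1 - (Real.exp 1)⁻¹) := by
    have hE : (0:ℝ) < Real.exp 1 := Real.exp_pos 1
    have hE1 : (1:ℝ) < Real.exp 1 := by
      have := Real.exp_one_gt_d9; linarith
    have h1 : Real.exp (-1) = (Real.exp 1)⁻¹ := Real.exp_neg 1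
    have h2 : Real.exp (-2) = (Real.exp 1 * Real.exp 1)⁻¹ := by
      rw [Real.exp_neg, show (2:ℝ) = 1 + 1 by norm_num, Real.exp_add]
    have hEinv : (Real.exp 1)⁻¹ < 1 := by
      rw [inv_lt_one_iff₀]; right; exact hE1
    have hne2 : Real.exp 1 - (Real.exp 1)⁻¹ ≠ 0 := by
      intro h; nlinarith
    rw [div_eq_div_iff hne hne2, h1, h2]
    field_simp
    ring
  rw [hval] at hg
  refine hg.congr' ?_
  filter_upwards [eventually_ge_atTop 4] with N hN
  have hn4 : (4:ℝ) ≤ (N:ℝ) := by exact_mod_cast hN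
  set n : ℝ := (N : ℝ) with hn
  have h2 : (0:ℝ) < n - 2 := by linarith
  have h1 : (0:ℝ) < n - 1 := by linarith
  have h0 : (0:ℝ) < n := by linarith
  set t : ℝ := 1 / Real.sqrt (n - 2) with ht
  have hcos : Real.cos (arctan t) ^ 2 = (n - 2) / (n - 1) := by
    rw [Real.cos_arctan, div_pow, one_pow, sq_sqrt]
    · rw [ht, div_pow, one_pow, sq_sqrt h2.le]
      rw [div_eq_div_iff (by positivity) h1.ne']
      field_simp
      ring
    · rw [ht, div_pow, one_pow, sq_sqrt h2.le]
      positivity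
  have hsin : Real.sin (arctan t) ^ 2 = 1 / (n - 1) := by
    rw [Real.sin_sq, hcos]
    field_simp
    norm_num
  have hcos2 : Real.cos (2 * arctan t) = 1 + (-2) / (n - 1) := by
    rw [Real.cos_two_mul, hcos]
    field_simp
    ring
  have hpow : Real.cos (arctan t) ^ (2 * N - 4) = ((n - 2) / (n - 1)) ^ (N - 2) := by
    rw [show 2 * N - 4 = 2 * (N - 2) from by omega, pow_mul, hcos]
  have hbase : (n - 2) / (n - 1) = 1 + (-1) / (n - 1) := by field_simp; ring
  -- abbreviations
  set b : ℝ := (1 + (-2) / (n - 1)) ^ (N - 2) with hbdef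
  have hb0 : 0 ≤ b := by
    apply pow_nonneg
    have : (-2 : ℝ) / (n - 1) ≥ -1 := by
      rw [ge_iff_le, le_div_iff₀ h1]; linarith
    linarith
  have hblt : b < 1 := by
    apply pow_lt_one₀
    · have : (-2 : ℝ) / (n - 1) ≥ -1 := by
        rw [ge_iff_le, le_div_iff₀ h1]; linarith
      linarith
    · have : (-2 : ℝ) / (n - 1) < 0 := div_neg_of_neg_of_pos (by norm_num) h1
      linarith
    · omega
  have hD : (0:ℝ) < n ^ 2 * (1 - b) + n * (1 + b) := by
    have hp1 : (0:ℝ) < n ^ 2 * (1 - b) :=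
      mul_pos (by positivity) (by linarith)
    have hp2 : (0:ℝ) < n * (1 + b) := mul_pos h0 (by linarith)
    linarith
  have hD' : (0:ℝ) < (1 - b) + (1 + b) * (1 / n) := by
    have hp2 : (0:ℝ) < (1 + b) * (1 / n) := by positivity
    linarith
  symm
  show f N (arctan t) = _
  simp only [f, Pi.div_apply]
  rw [hsin, hpow, hcos2, hbase, ← hbdef]
  rw [div_eq_div_iff hD.ne' hD'.ne']
  clear_value b t
  rw [← hn]
  clear_value n
  field_simp
end

section
/- For every N ≥ 3 and every x with 0 < x < π/2, f(N, x) = 2N(N−1)² sin²(x) cos^{2N−4}(x) / (N²(1 − cos^{N−2}(2x)) + N(1 + cos^{N−2}(2x))) satisfies f(N, x) ≤ 1. -/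
open Real Set

/-- Bernoulli-type bound: `q^m (1 + m(1-q)) ≤ 1` for `q ∈ [0,1]`. -/
lemma aux_L1 (m : ℕ) (q : ℝ) (h0 : 0 ≤ q) (h1 : q ≤ 1) :
    q ^ m * (1 + (m : ℝ) * (1 - q)) ≤ 1 := by
  induction m with
  | zero => simp
  | succ n ih =>
    have hpow : q ^ (n + 1) ≤ 1 := pow_le_one₀ h0 h1
    have hpn : 0 ≤ q ^ n := pow_nonneg h0 n
    rw [pow_succ] at hpow ⊢
    push_cast
    nlinarith [mul_le_mul_of_nonneg_left ih h0,
      mul_le_mul_of_nonneg_right hpow (by linarith : (0:ℝ) ≤ 1 - q)]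

lemma aux_L2 (m : ℕ) (q : ℝ) (h0 : 0 ≤ q) (h1 : q ≤ 1) :
    2 * q ≤ 2 * (m : ℝ) * (1 - q) + q ^ m * (1 + q) := by
  induction m with
  | zero => simp; linarith
  | succ n ih =>
    have hpow : q ^ n ≤ 1 := pow_le_one₀ h0 h1
    have hpn : 0 ≤ q ^ n := pow_nonneg h0 n
    have h2 : 0 ≤ 2 - q ^ n * (1 + q) := by nlinarith
    rw [pow_succ]
    push_cast
    nlinarith [ih, mul_nonneg (by linarith : (0:ℝ) ≤ 1 - q) h2]

lemma aux_L3 (m : ℕ) (q : ℝ) (h0 : 0 ≤ q) (h1 : q ≤ 1) :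
    2 * (m : ℝ) * (q ^ m * (1 - q)) ≤ 1 - q ^ (2 * m) := by
  induction m with
  | zero => simp
  | succ n ih =>
    have hL2 := aux_L2 n q h0 h1
    have hpn : 0 ≤ q ^ n := pow_nonneg h0 n
    have hmul := mul_le_mul_of_nonneg_left hL2 hpn
    have e1 : q ^ (2 * (n + 1)) = (q ^ n) ^ 2 * q ^ 2 := by ring
    have e2 : q ^ (2 * n) = (q ^ n) ^ 2 := by ring
    have e3 : q ^ (n + 1) = q ^ n * q := by ring
    rw [e1, e3]
    rw [e2] at ih
    push_cast
    nlinarith [ih, hmul, hpn, sq_nonneg (q ^ n)]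

/-- key inequality for `u ∈ (0, 1/2]`. -/
lemma aux_keyA (m : ℕ) (u : ℝ) (hu0 : 0 < u) (hu2 : u ≤ 1 / 2) :
    2 * ((m : ℝ) + 1) ^ 2 * u * (1 - u) ^ m ≤ 2 + ((m : ℝ) + 1) * (1 - (1 - 2 * u) ^ m) := by
  have hq0 : (0:ℝ) ≤ 1 - u := by linarith
  have hq1 : (1:ℝ) - u ≤ 1 := by linarith
  have ht0 : 0 ≤ 1 - 2 * u := by linarith
  have ht : 1 - 2 * u ≤ (1 - u) ^ 2 := by nlinarith [sq_nonneg u]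
  have htm : (1 - 2 * u) ^ m ≤ (1 - u) ^ (2 * m) := by
    calc (1 - 2 * u) ^ m ≤ ((1 - u) ^ 2) ^ m := pow_le_pow_left₀ ht0 ht m
    _ = (1 - u) ^ (2 * m) := (pow_mul (1 - u) 2 m).symm
  have h5 := aux_L3 m (1 - u) hq0 hq1
  have h6 := aux_L1 m (1 - u) hq0 hq1
  have hA : 0 ≤ (1 - u) ^ m := pow_nonneg hq0 m
  have hM : (0 : ℝ) ≤ (m : ℝ) + 1 := by positivity
  have h4 := mul_le_mul_of_nonneg_left htm hM
  have h5' := mul_le_mul_of_nonneg_left h5 hM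
  have hresid : 0 ≤ (1 - u) ^ m * (1 - u) := mul_nonneg hA hq0
  nlinarith [h4, h5', h6, hresid, hA]

/-- key inequality for all `u ∈ (0,1)`, `m ≥ 1`. -/
lemma aux_key (m : ℕ) (hm : 1 ≤ m) (u : ℝ) (hu0 : 0 < u) (hu1 : u < 1) :
    2 * ((m : ℝ) + 1) ^ 2 * u * (1 - u) ^ m ≤ 2 + ((m : ℝ) + 1) * (1 - (1 - 2 * u) ^ m) := by
  rcases le_or_gt u (1 / 2) with h | h
  · exact aux_keyA m u hu0 h
  · have hw0 : 0 < 1 - u := by linarith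
    have hw2 : 1 - u ≤ 1 / 2 := by linarith
    have hkey := aux_keyA m (1 - u) hw0 hw2
    have hb1 : (1 - 2 * u) ^ m ≤ (1 - 2 * (1 - u)) ^ m := by
      have h1 : (1 - 2 * u) = -(1 - 2 * (1 - u)) := by ring
      calc (1 - 2 * u) ^ m ≤ |(1 - 2 * u) ^ m| := le_abs_self _
        _ = |1 - 2 * u| ^ m := by rw [abs_pow]
        _ = (1 - 2 * (1 - u)) ^ m := by
            rw [h1, abs_neg, abs_of_nonneg (by linarith)]
    have hb2 : u * (1 - u) ^ m ≤ (1 - u) * (1 - (1 - u)) ^ m := by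
      obtain ⟨k, rfl⟩ : ∃ k, m = k + 1 := ⟨m - 1, by omega⟩
      have hk : (1 - u) ^ k ≤ u ^ k :=
        pow_le_pow_left₀ (le_of_lt hw0) (by linarith) k
      have hsimp : (1 - (1 - u)) = u := by ring
      rw [hsimp, pow_succ, pow_succ]
      nlinarith [mul_le_mul_of_nonneg_left hk
        (mul_nonneg hu0.le hw0.le)]
    have hM : (0 : ℝ) ≤ (m : ℝ) + 1 := by positivity
    have hM2 : (0 : ℝ) ≤ 2 * ((m : ℝ) + 1) ^ 2 := by positivity
    nlinarith [hkey, mul_le_mul_of_nonneg_left hb1 hM,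
      mul_le_mul_of_nonneg_left hb2 hM2]

lemma aux_main (N : ℕ) (hN : 3 ≤ N) (x : ℝ) (hx : x ∈ Ioo 0 (π / 2)) :
    (2 * (N : ℝ) * ((N : ℝ) - 1) ^ 2 * Real.sin x ^ 2 * Real.cos x ^ (2 * N - 4)) /
    ((N : ℝ) ^ 2 * (1 - Real.cos (2 * x) ^ (N - 2)) +
      (N : ℝ) * (1 + Real.cos (2 * x) ^ (N - 2))) ≤ 1 := by
  obtain ⟨hx0, hx2⟩ := hx
  have hpi := Real.pi_pos
  have hs : 0 < Real.sin x := Real.sin_pos_of_pos_of_lt_pi hx0 (by linarith)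
  have hc : 0 < Real.cos x := Real.cos_pos_of_mem_Ioo ⟨by linarith, hx2⟩
  have hpyth := Real.sin_sq_add_cos_sq x
  set u : ℝ := Real.sin x ^ 2 with hu
  have hu0 : 0 < u := by positivity
  have hcs : Real.cos x ^ 2 = 1 - u := by linarith
  have hu1 : u < 1 := by nlinarith [sq_nonneg (Real.cos x)]
  have ht : Real.cos (2 * x) = 1 - 2 * u := by
    rw [Real.cos_two_mul, hcs]; ring
  set m : ℕ := N - 2 with hm
  have hmN : N = m + 2 := by omega
  have hexp : 2 * N - 4 = 2 * m := by omega
  have hcp : Real.cos x ^ (2 * N - 4) = (1 - u) ^ m := by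
    rw [hexp, pow_mul, hcs]
  have hMcast : ((N : ℝ)) = (m : ℝ) + 2 := by rw [hmN]; push_cast; ring
  rw [hcp, ht, hMcast]
  set M : ℝ := (m : ℝ) with hMdef
  have hm1 : (1 : ℝ) ≤ M := by
    rw [hMdef]; exact_mod_cast (by omega : 1 ≤ m)
  set T : ℝ := (1 - 2 * u) ^ m with hT
  have hTabs : |T| ≤ 1 := by
    rw [hT, abs_pow]
    apply pow_le_one₀ (abs_nonneg _)
    rw [abs_le]; constructor <;> linarith
  have hT1 : T ≤ 1 := le_trans (le_abs_self _) hTabs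
  have hTn1 : -1 ≤ T := by
    have := neg_abs_le T
    linarith
  have hD : 0 < (M + 2) ^ 2 * (1 - T) + (M + 2) * (1 + T) := by
    nlinarith [mul_le_mul_of_nonneg_right (show (9:ℝ) ≤ (M + 2) ^ 2 by nlinarith)
        (show (0:ℝ) ≤ 1 - T by linarith),
      mul_le_mul_of_nonneg_right (show (3:ℝ) ≤ M + 2 by linarith)
        (show (0:ℝ) ≤ 1 + T by linarith)]
  rw [div_le_one hD]
  have hkey := aux_key m (by omega) u hu0 hu1
  rw [← hT] at hkey
  rw [← hMdef] at hkey
  have hMpos : (0 : ℝ) < M + 2 := by linarith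
  nlinarith [mul_le_mul_of_nonneg_left hkey (le_of_lt hMpos)]


/-- For every N ≥ 3 and every x ∈ (0, π/2), f(N, x) ≤ 1. -/
theorem stmt_5 (N : ℕ) (hN : 3 ≤ N) (x : ℝ) (hx : x ∈ Ioo 0 (π / 2)) :
    f N x ≤ 1 := by
  unfold f
  exact aux_main N hN x hx
end
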